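/- For every τ in the upper half-plane and every z ∈ ℂ, ϑ₂(τ)²·θ₃(z|τ)² - ϑ₃(τ)²·θ₂(z|τ)² = ϑ₄(τ)²·θ₁(z|τ)². -/
import Mathlib

open Complex

/-- Jacobi's θ₁. -/
noncomputable def jtheta1 (z τ : ℂ) : ℂ :=
  -I * Complex.exp ((Real.pi : ℂ) * I * τ / 4) *
    ∑' k : ℤ, (-1 : ℂ) ^ k * Complex.exp (((k : ℂ) ^ 2 + (k : ℂ)) * (Real.pi : ℂ) * I * τ)
      * Complex.exp ((2 * (k : ℂ) + 1) * (Real.pi : ℂ) * I * z)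

/-- Jacobi's θ₂. -/
noncomputable def jtheta2 (z τ : ℂ) : ℂ :=
  Complex.exp ((Real.pi : ℂ) * I * τ / 4) *
    ∑' k : ℤ, Complex.exp (((k : ℂ) ^ 2 + (k : ℂ)) * (Real.pi : ℂ) * I * τ)
      * Complex.exp ((2 * (k : ℂ) + 1) * (Real.pi : ℂ) * I * z)

/-- Jacobi's θ₃. -/
noncomputable def jtheta3 (z τ : ℂ) : ℂ :=
  ∑' k : ℤ, Complex.exp ((k : ℂ) ^ 2 * (Real.pi : ℂ) * I * τ)
    * Complex.exp (2 * (k : ℂ) * (Real.pi : ℂ) * I * z)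

/-- Jacobi's θ₄. -/
noncomputable def jtheta4 (z τ : ℂ) : ℂ :=
  ∑' k : ℤ, (-1 : ℂ) ^ k * Complex.exp ((k : ℂ) ^ 2 * (Real.pi : ℂ) * I * τ)
    * Complex.exp (2 * (k : ℂ) * (Real.pi : ℂ) * I * z)

namespace QTI23

open Function

/-- The general theta-like summand `exp (π i (k² τ + k b + c))`. -/
noncomputable def gterm (τ b c : ℂ) (k : ℤ) : ℂ :=
  Complex.exp ((Real.pi : ℂ) * I * ((k : ℂ) ^ 2 * τ + (k : ℂ) * b + c))

/-- The general theta-like sum `∑ₖ exp (π i (k² τ + k b + c))`. -/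
noncomputable def Gsum (τ b c : ℂ) : ℂ := ∑' k : ℤ, gterm τ b c k

lemma gterm_eq (τ b c : ℂ) (k : ℤ) :
    gterm τ b c k = Complex.exp ((Real.pi : ℂ) * I * c) * jacobiTheta₂_term k (b / 2) τ := by
  rw [gterm, jacobiTheta₂_term, ← Complex.exp_add]
  congr 1
  ring

lemma summable_norm_jacobi {τ : ℂ} (hτ : 0 < τ.im) (z : ℂ) :
    Summable fun k : ℤ => ‖jacobiTheta₂_term k z τ‖ := by
  refine (summable_pow_mul_jacobiTheta₂_term_bound |z.im| hτ 0).of_nonneg_of_le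
    (fun k => norm_nonneg _) (fun k => ?_)
  simpa only [pow_zero, one_mul] using norm_jacobiTheta₂_term_le hτ le_rfl le_rfl k

lemma summable_norm_gterm {τ : ℂ} (hτ : 0 < τ.im) (b c : ℂ) :
    Summable fun k : ℤ => ‖gterm τ b c k‖ := by
  simp only [gterm_eq, norm_mul]
  exact (summable_norm_jacobi hτ (b / 2)).mul_left _

/-- Splitting a double sum over `ℤ × ℤ` according to the parity of the sum of coordinates,
reparametrised by `(u, v) ↦ (u + v, u - v)` resp. `(u, v) ↦ (u + v + 1, u - v)`. -/
lemma tsum_split (F : ℤ × ℤ → ℂ) (hF : Summable F) :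
    ∑' p : ℤ × ℤ, F p = (∑' p : ℤ × ℤ, F (p.1 + p.2, p.1 - p.2))
      + ∑' p : ℤ × ℤ, F (p.1 + p.2 + 1, p.1 - p.2) := by
  set S : Set (ℤ × ℤ) := {p | Even (p.1 + p.2)} with hS
  have h1 : Injective (fun p : ℤ × ℤ => ((p.1 + p.2, p.1 - p.2) : ℤ × ℤ)) := by
    intro p q h
    simp only [Prod.mk.injEq, Prod.ext_iff] at h ⊢
    omega
  have h2 : Injective (fun p : ℤ × ℤ => ((p.1 + p.2 + 1, p.1 - p.2) : ℤ × ℤ)) := by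
    intro p q h
    simp only [Prod.mk.injEq, Prod.ext_iff] at h ⊢
    omega
  have hr1 : Set.range (fun p : ℤ × ℤ => ((p.1 + p.2, p.1 - p.2) : ℤ × ℤ)) = S := by
    ext ⟨m, n⟩
    simp only [Set.mem_range, hS, Set.mem_setOf_eq, Prod.ext_iff, Prod.exists]
    constructor
    · rintro ⟨u, v, h1, h2⟩; exact ⟨u, by omega⟩
    · rintro ⟨u, hu⟩; exact ⟨u, m - u, by omega, by omega⟩
  have hr2 : Set.range (fun p : ℤ × ℤ => ((p.1 + p.2 + 1, p.1 - p.2) : ℤ × ℤ)) = Sᶜ := by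
    ext ⟨m, n⟩
    simp only [Set.mem_range, hS, Set.mem_compl_iff, Set.mem_setOf_eq, Prod.ext_iff, Prod.exists,
      Int.not_even_iff_odd]
    constructor
    · rintro ⟨u, v, h1, h2⟩; exact ⟨u, by omega⟩
    · rintro ⟨u, hu⟩; exact ⟨u, m - u - 1, by omega, by omega⟩
  have e1 : ∀ p : ℤ × ℤ, S.indicator F (p.1 + p.2, p.1 - p.2) = F (p.1 + p.2, p.1 - p.2) := by
    intro p
    apply Set.indicator_of_mem
    rw [hS]; exact ⟨p.1, by ring⟩
  have e2 : ∀ p : ℤ × ℤ,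
      Sᶜ.indicator F (p.1 + p.2 + 1, p.1 - p.2) = F (p.1 + p.2 + 1, p.1 - p.2) := by
    intro p
    apply Set.indicator_of_mem
    simp only [Set.mem_compl_iff, hS, Set.mem_setOf_eq, Int.not_even_iff_odd]
    exact ⟨p.1, by ring⟩
  calc ∑' p : ℤ × ℤ, F p = ∑' p, (S.indicator F p + Sᶜ.indicator F p) :=
        tsum_congr fun p => congrFun (Set.indicator_self_add_compl S F).symm p
    _ = (∑' p, S.indicator F p) + ∑' p, Sᶜ.indicator F p :=
        Summable.tsum_add (hF.indicator S) (hF.indicator Sᶜ)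
    _ = (∑' p : ℤ × ℤ, F (p.1 + p.2, p.1 - p.2)) + ∑' p : ℤ × ℤ, F (p.1 + p.2 + 1, p.1 - p.2) := by
        rw [← h1.tsum_eq (f := S.indicator F) (by rw [hr1]; exact Set.support_indicator_subset),
          ← h2.tsum_eq (f := Sᶜ.indicator F) (by rw [hr2]; exact Set.support_indicator_subset)]
        simp only [e1, e2]

lemma gterm_mul_even (τ b c : ℂ) (u v : ℤ) :
    gterm τ b c (u + v) * gterm τ b c (u - v)
      = gterm (2 * τ) (2 * b) (2 * c) u * gterm (2 * τ) 0 0 v := by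
  simp only [gterm, ← Complex.exp_add]
  congr 1
  push_cast
  ring

lemma gterm_mul_odd (τ b c : ℂ) (u v : ℤ) :
    gterm τ b c (u + v + 1) * gterm τ b c (u - v)
      = gterm (2 * τ) (2 * τ + 2 * b) (τ + b + 2 * c) u * gterm (2 * τ) (2 * τ) 0 v := by
  simp only [gterm, ← Complex.exp_add]
  congr 1
  push_cast
  ring

/-- The master "Landen/doubling" identity for squares of theta-like sums. -/
lemma mainM {τ : ℂ} (hτ : 0 < τ.im) (b c : ℂ) :
    Gsum τ b c ^ 2 = Gsum (2 * τ) (2 * b) (2 * c) * Gsum (2 * τ) 0 0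
      + Gsum (2 * τ) (2 * τ + 2 * b) (τ + b + 2 * c) * Gsum (2 * τ) (2 * τ) 0 := by
  have hτ2 : 0 < (2 * τ).im := by simp [Complex.mul_im]; linarith
  have hs := summable_norm_gterm hτ b c
  have hF : Summable fun p : ℤ × ℤ => gterm τ b c p.1 * gterm τ b c p.2 :=
    (hs.mul_norm hs).of_norm
  rw [sq, Gsum, Gsum, tsum_mul_tsum_of_summable_norm hs hs, tsum_split _ hF]
  show _ = Gsum _ _ _ * Gsum _ _ _ + Gsum _ _ _ * Gsum _ _ _
  simp only [Gsum]
  congr 1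
  · rw [tsum_congr fun p : ℤ × ℤ => gterm_mul_even τ b c p.1 p.2]
    exact (tsum_mul_tsum_of_summable_norm (summable_norm_gterm hτ2 _ _)
      (summable_norm_gterm hτ2 _ _)).symm
  · rw [tsum_congr fun p : ℤ × ℤ => gterm_mul_odd τ b c p.1 p.2]
    exact (tsum_mul_tsum_of_summable_norm (summable_norm_gterm hτ2 _ _)
      (summable_norm_gterm hτ2 _ _)).symm

lemma neg_one_zpow_eq (k : ℤ) : ((-1 : ℂ)) ^ k = Complex.exp ((k : ℂ) * ((Real.pi : ℂ) * I)) := by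
  rw [Complex.exp_int_mul, Complex.exp_pi_mul_I]

lemma Gsum_const (τ b c : ℂ) :
    Gsum τ b c = Complex.exp ((Real.pi : ℂ) * I * c) * Gsum τ b 0 := by
  rw [Gsum, Gsum, ← tsum_mul_left]
  refine tsum_congr fun k => ?_
  rw [gterm, gterm, ← Complex.exp_add]
  congr 1
  ring

lemma Gsum_per (τ b c : ℂ) : Gsum τ (b + 2) c = Gsum τ b c := by
  refine tsum_congr fun k => ?_
  rw [gterm, gterm, show (Real.pi : ℂ) * I * ((k : ℂ) ^ 2 * τ + (k : ℂ) * (b + 2) + c)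
    = (Real.pi : ℂ) * I * ((k : ℂ) ^ 2 * τ + (k : ℂ) * b + c) + (k : ℂ) * (2 * (Real.pi : ℂ) * I)
    from by ring, Complex.exp_add, Complex.exp_int_mul]
  rw [Complex.exp_two_pi_mul_I, one_zpow, mul_one]

lemma Gsum_shift (τ b c : ℂ) : Gsum τ (b + 2 * τ) (τ + b + c) = Gsum τ b c := by
  rw [Gsum, Gsum, ← (Equiv.addRight (1 : ℤ)).tsum_eq (gterm τ b c)]
  refine tsum_congr fun k => ?_
  rw [gterm, gterm]
  congr 1
  push_cast [Equiv.coe_addRight]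
  ring

lemma jtheta3_eq (z τ : ℂ) : jtheta3 z τ = Gsum τ (2 * z) 0 := by
  refine tsum_congr fun k => ?_
  rw [gterm, ← Complex.exp_add]
  congr 1
  ring

lemma jtheta4_eq (z τ : ℂ) : jtheta4 z τ = Gsum τ (2 * z + 1) 0 := by
  refine tsum_congr fun k => ?_
  rw [neg_one_zpow_eq, gterm, ← Complex.exp_add, ← Complex.exp_add]
  congr 1
  ring

lemma jtheta2_eq (z τ : ℂ) :
    jtheta2 z τ = Complex.exp ((Real.pi : ℂ) * I * τ / 4) * Gsum τ (τ + 2 * z) z := by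
  rw [jtheta2]
  congr 1
  refine tsum_congr fun k => ?_
  rw [gterm, ← Complex.exp_add]
  congr 1
  ring

lemma jtheta1_eq (z τ : ℂ) :
    jtheta1 z τ = -I * Complex.exp ((Real.pi : ℂ) * I * τ / 4) * Gsum τ (τ + 2 * z + 1) z := by
  rw [jtheta1]
  congr 1
  refine tsum_congr fun k => ?_
  rw [neg_one_zpow_eq, gterm, ← Complex.exp_add, ← Complex.exp_add]
  congr 1
  ring

lemma j3sq {τ : ℂ} (hτ : 0 < τ.im) (z : ℂ) :
    jtheta3 z τ ^ 2
      = Gsum (2*τ) (4*z) 0 * Gsum (2*τ) 0 0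
        + Complex.exp ((Real.pi : ℂ)*I*τ) * Complex.exp ((Real.pi : ℂ)*I*(2*z))
          * (Gsum (2*τ) (2*τ+4*z) 0 * Gsum (2*τ) (2*τ) 0) := by
  rw [jtheta3_eq, mainM hτ,
    show (τ + 2*z + 2*0 : ℂ) = τ + 2*z by ring,
    show (2*(2*z) : ℂ) = 4*z by ring,
    show ((2:ℂ)*0) = 0 by ring,
    Gsum_const (2*τ) (2*τ+4*z) (τ+2*z),
    show ((Real.pi : ℂ)*I*(τ+2*z)) = (Real.pi : ℂ)*I*τ + (Real.pi : ℂ)*I*(2*z) by ring,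
    Complex.exp_add]
  ring

lemma j4sq {τ : ℂ} (hτ : 0 < τ.im) (z : ℂ) :
    jtheta4 z τ ^ 2
      = Gsum (2*τ) (4*z) 0 * Gsum (2*τ) 0 0
        - Complex.exp ((Real.pi : ℂ)*I*τ) * Complex.exp ((Real.pi : ℂ)*I*(2*z))
          * (Gsum (2*τ) (2*τ+4*z) 0 * Gsum (2*τ) (2*τ) 0) := by
  rw [jtheta4_eq, mainM hτ,
    show (τ + (2*z+1) + 2*0 : ℂ) = τ + 2*z + 1 by ring,
    show (2*(2*z+1) : ℂ) = 4*z + 2 by ring,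
    show (2*τ + (4*z+2) : ℂ) = (2*τ + 4*z) + 2 by ring,
    show ((2:ℂ)*0) = 0 by ring,
    Gsum_per (2*τ) (4*z) 0,
    Gsum_per (2*τ) (2*τ+4*z) (τ+2*z+1),
    Gsum_const (2*τ) (2*τ+4*z) (τ+2*z+1),
    show ((Real.pi : ℂ)*I*(τ+2*z+1))
      = (Real.pi : ℂ)*I*τ + (Real.pi : ℂ)*I*(2*z) + (Real.pi : ℂ)*I by ring,
    Complex.exp_add, Complex.exp_add, Complex.exp_pi_mul_I]
  ring

lemma j2sq {τ : ℂ} (hτ : 0 < τ.im) (z : ℂ) :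
    jtheta2 z τ ^ 2
      = Complex.exp ((Real.pi : ℂ)*I*τ/4) ^ 2 *
        (Complex.exp ((Real.pi : ℂ)*I*(2*z)) * (Gsum (2*τ) (2*τ+4*z) 0 * Gsum (2*τ) 0 0)
          + Gsum (2*τ) (4*z) 0 * Gsum (2*τ) (2*τ) 0) := by
  rw [jtheta2_eq, mul_pow, mainM hτ,
    show (2*(τ+2*z) : ℂ) = 2*τ + 4*z by ring,
    show (2*τ + (2*τ + 4*z) : ℂ) = 4*z + 2*(2*τ) by ring,
    show (τ + (τ+2*z) + 2*z : ℂ) = 2*τ + 4*z + 0 by ring,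
    Gsum_shift (2*τ) (4*z) 0,
    Gsum_const (2*τ) (2*τ+4*z) (2*z)]
  ring

lemma j1sq {τ : ℂ} (hτ : 0 < τ.im) (z : ℂ) :
    jtheta1 z τ ^ 2
      = -(Complex.exp ((Real.pi : ℂ)*I*τ/4) ^ 2) *
        (Complex.exp ((Real.pi : ℂ)*I*(2*z)) * (Gsum (2*τ) (2*τ+4*z) 0 * Gsum (2*τ) 0 0)
          - Gsum (2*τ) (4*z) 0 * Gsum (2*τ) (2*τ) 0) := by
  rw [jtheta1_eq, mul_pow, mul_pow, neg_sq, Complex.I_sq, mainM hτ,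
    show (2*(τ+2*z+1) : ℂ) = (2*τ + 4*z) + 2 by ring,
    show (2*τ + ((2*τ + 4*z) + 2) : ℂ) = (4*τ + 4*z) + 2 by ring,
    show (τ + (τ+2*z+1) + 2*z : ℂ) = 2*τ + 4*z + 1 by ring,
    Gsum_per (2*τ) (2*τ+4*z) (2*z),
    Gsum_per (2*τ) (4*τ+4*z) (2*τ+4*z+1),
    show (4*τ + 4*z : ℂ) = 4*z + 2*(2*τ) by ring,
    Gsum_shift (2*τ) (4*z) 1,
    Gsum_const (2*τ) (2*τ+4*z) (2*z),
    Gsum_const (2*τ) (4*z) 1, mul_one, Complex.exp_pi_mul_I]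
  ring

end QTI23

theorem quadratic_theta_identity_23 (τ : ℂ) (hτ : 0 < τ.im) (z : ℂ) :
    jtheta2 0 τ ^ 2 * jtheta3 z τ ^ 2 - jtheta3 0 τ ^ 2 * jtheta2 z τ ^ 2
      = jtheta4 0 τ ^ 2 * jtheta1 z τ ^ 2 := by
  rw [QTI23.j2sq hτ 0, QTI23.j3sq hτ z, QTI23.j3sq hτ 0, QTI23.j2sq hτ z, QTI23.j4sq hτ 0,
    QTI23.j1sq hτ z,
    show ((4:ℂ)*0) = 0 by norm_num,
    show (2*τ + (0:ℂ) : ℂ) = 2*τ by ring,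
    show ((Real.pi : ℂ)*I*(2*0)) = 0 by ring,
    Complex.exp_zero]
  ring
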